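/- arXiv:1608.02184 — 2 statements merged into one kernel-verified Lean document; each statement's English description precedes it below -/
import Mathlib

section
/- Let t : ℤ → ℂ, let T_n be the n×n Toeplitz matrix whose (j,k) entry is t_{j-k}, and let Ĉ_n be the n×n circulant matrix whose (j,k) entry is ĉ_{(k-j) mod n}, where ĉ_0 = t_0 and ĉ_k = t_{-k} + t_{n-k} for 1 ≤ k ≤ n-1. Then ‖Ĉ_n − T_n‖_F² = ∑_{k=-(n-1)}^{n-1} |k|·|t_k|². -/
/-- The `n × n` Toeplitz matrix with `(j,k)` entry `t_{j-k}`. -/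
noncomputable def toeplitz (t : ℤ → ℂ) (n : ℕ) : Matrix (Fin n) (Fin n) ℂ :=
  Matrix.of fun j k => t ((j : ℤ) - (k : ℤ))

/-- Top-row coefficients `ĉ_0 = t_0` and `ĉ_k = t_{-k} + t_{n-k}` for `1 ≤ k ≤ n-1`. -/
noncomputable def hatCoeff (t : ℤ → ℂ) (n : ℕ) (k : ℤ) : ℂ :=
  if k = 0 then t 0 else t (-k) + t ((n : ℤ) - k)

/-- The circulant matrix `Ĉ_n` with `(j,k)` entry `ĉ_{(k-j) mod n}`. -/
noncomputable def hatCirculant (t : ℤ → ℂ) (n : ℕ) : Matrix (Fin n) (Fin n) ℂ :=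
  Matrix.of fun j k => hatCoeff t n (((k : ℤ) - (j : ℤ)) % (n : ℤ))

/-- Frobenius norm of a complex matrix. -/
noncomputable def frobNorm {n : ℕ} (A : Matrix (Fin n) (Fin n) ℂ) : ℝ :=
  Real.sqrt (∑ j, ∑ k, ‖A j k‖ ^ 2)

noncomputable def Gfun (t : ℤ → ℂ) (n : ℕ) (d : ℤ) : ℝ :=
  if d = 0 then 0 else if 0 < d then ‖t ((n:ℤ) - d)‖ ^ 2
    else ‖t (-d - (n:ℤ))‖ ^ 2

def phiFun (n : ℕ) (d : ℤ) : ℤ :=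
  if d = 0 then 0 else if 0 < d then (n:ℤ) - d else -d - (n:ℤ)

lemma fiber_card (n : ℕ) (d : ℤ) :
    ((Finset.univ : Finset (Fin n × Fin n)).filter
      (fun p => ((p.2 : ℤ) - (p.1 : ℤ)) = d)).card = n - d.natAbs := by
  classical
  rw [← Finset.card_range (n - d.natAbs)]
  refine Finset.card_bij' (fun p _ => (p.1 : ℕ) - (-d).toNat)
    (fun i hi => (⟨i + (-d).toNat, ?_⟩, ⟨i + d.toNat, ?_⟩)) ?_ ?_ ?_ ?_
  · simp only [Finset.mem_range] at hi; omega
  · simp only [Finset.mem_range] at hi; omega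
  · intro p hp
    simp only [Finset.mem_filter, Finset.mem_univ, true_and] at hp
    have h1 := p.1.isLt
    have h2 := p.2.isLt
    simp only [Finset.mem_range]
    omega
  · intro i hi
    simp only [Finset.mem_range] at hi
    simp only [Finset.mem_filter, Finset.mem_univ, true_and]
    push_cast
    omega
  · intro p hp
    simp only [Finset.mem_filter, Finset.mem_univ, true_and] at hp
    have h1 := p.1.isLt
    have h2 := p.2.isLt
    ext
    · simp; omega
    · simp; omega
  · intro i hi
    simp only [Finset.mem_range] at hi
    simp


/-- `‖Ĉ_n − T_n‖_F² = ∑_{k=-(n-1)}^{n-1} |k| |t_k|²`. -/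
theorem frobNorm_sq_hatCirculant_sub_toeplitz
    (t : ℤ → ℂ) (n : ℕ) :
    frobNorm (hatCirculant t n - toeplitz t n) ^ 2 =
      ∑ k ∈ Finset.Icc (-(n : ℤ) + 1) ((n : ℤ) - 1),
        |(k : ℝ)| * ‖t k‖ ^ 2 := by
  classical
  have hnn : (0:ℝ) ≤ ∑ j, ∑ k, ‖(hatCirculant t n - toeplitz t n) j k‖ ^ 2 := by
    positivity
  rw [frobNorm, Real.sq_sqrt hnn]
  have key : ∀ j k : Fin n,
      ‖(hatCirculant t n - toeplitz t n) j k‖ ^ 2 = Gfun t n ((k:ℤ) - (j:ℤ)) := by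
    intro j k
    have hj := j.isLt
    have hk := k.isLt
    have hn : 0 < (n:ℤ) := by omega
    set d : ℤ := (k:ℤ) - (j:ℤ) with hd
    have hdlb : -(n:ℤ) + 1 ≤ d := by omega
    have hdub : d ≤ (n:ℤ) - 1 := by omega
    simp only [Matrix.sub_apply, hatCirculant, toeplitz, Matrix.of_apply, Gfun]
    rcases lt_trichotomy d 0 with h | h | h
    · have hmod : d % (n:ℤ) = d + n := by
        rw [← Int.add_mul_emod_self_left (c := 1), mul_one]
        exact Int.emod_eq_of_lt (by omega) (by omega)
      rw [hmod, hatCoeff, if_neg (by omega), if_neg (by omega), if_neg (by omega)]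
      have : (j:ℤ) - (k:ℤ) = -d := by omega
      rw [this, show ((n:ℤ) - (d + (n:ℤ))) = -d from by ring,
        show (-(d + (n:ℤ))) = -d - (n:ℤ) from by ring, add_sub_cancel_right]
    · have hmod : d % (n:ℤ) = 0 := by rw [h]; simp
      rw [hmod, hatCoeff, if_pos rfl, if_pos h]
      have : (j:ℤ) - (k:ℤ) = 0 := by omega
      rw [this]
      simp
    · have hmod : d % (n:ℤ) = d := Int.emod_eq_of_lt (by omega) (by omega)
      rw [hmod, hatCoeff, if_neg (by omega), if_neg (by omega), if_pos h]
      have : (j:ℤ) - (k:ℤ) = -d := by omega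
      rw [this, add_sub_cancel_left]
  calc ∑ j, ∑ k : Fin n, ‖(hatCirculant t n - toeplitz t n) j k‖ ^ 2
      = ∑ p : Fin n × Fin n, Gfun t n ((p.2:ℤ) - (p.1:ℤ)) := by
        rw [Fintype.sum_prod_type]
        exact Finset.sum_congr rfl fun j _ => Finset.sum_congr rfl fun k _ => key j k
    _ = ∑ d ∈ Finset.Icc (-(n:ℤ) + 1) ((n:ℤ) - 1),
          ∑ p ∈ (Finset.univ : Finset (Fin n × Fin n)).filter
            (fun p => ((p.2:ℤ) - (p.1:ℤ)) = d), Gfun t n ((p.2:ℤ) - (p.1:ℤ)) := by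
        rw [Finset.sum_fiberwise_of_maps_to]
        intro p _
        have h1 := p.1.isLt
        have h2 := p.2.isLt
        simp only [Finset.mem_Icc]
        omega
    _ = ∑ d ∈ Finset.Icc (-(n:ℤ) + 1) ((n:ℤ) - 1), ((n - d.natAbs : ℕ) : ℝ) * Gfun t n d := by
        refine Finset.sum_congr rfl fun d hd => ?_
        rw [Finset.sum_congr rfl (fun p hp => ?_), Finset.sum_const, fiber_card,
          nsmul_eq_mul]
        simp only [Finset.mem_filter] at hp
        rw [hp.2]
    _ = ∑ k ∈ Finset.Icc (-(n : ℤ) + 1) ((n : ℤ) - 1),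
        |(k : ℝ)| * ‖t k‖ ^ 2 := by
        refine Finset.sum_nbij' (i := phiFun n) (j := phiFun n) ?_ ?_ ?_ ?_ ?_
        · intro d hd
          simp only [Finset.mem_Icc] at hd ⊢
          unfold phiFun
          split_ifs <;> omega
        · intro d hd
          simp only [Finset.mem_Icc] at hd ⊢
          unfold phiFun
          split_ifs <;> omega
        · intro d hd
          simp only [Finset.mem_Icc] at hd
          unfold phiFun
          split_ifs <;> omega
        · intro d hd
          simp only [Finset.mem_Icc] at hd
          unfold phiFun
          split_ifs <;> omega
        · intro d hd
          simp only [Finset.mem_Icc] at hd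
          rcases lt_trichotomy d 0 with h | h | h
          · have hphi : phiFun n d = -d - (n:ℤ) := by
              unfold phiFun; rw [if_neg (by omega), if_neg (by omega)]
            have hg : Gfun t n d = ‖t (-d - (n:ℤ))‖ ^ 2 := by
              unfold Gfun; rw [if_neg (by omega), if_neg (by omega)]
            have h1 : ((n - d.natAbs : ℕ) : ℝ) = |(((-d - (n:ℤ)) : ℤ) : ℝ)| := by
              rw [← Int.cast_abs,
                show |(-d - (n:ℤ))| = ((n - d.natAbs : ℕ) : ℤ) from by
                  rw [abs_of_nonpos (by omega)]; omega]
              norm_cast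
            rw [hphi, hg, h1]
          · subst h
            simp [phiFun, Gfun]
          · have hphi : phiFun n d = (n:ℤ) - d := by
              unfold phiFun; rw [if_neg (by omega), if_pos h]
            have hg : Gfun t n d = ‖t ((n:ℤ) - d)‖ ^ 2 := by
              unfold Gfun; rw [if_neg (by omega), if_pos h]
            have h1 : ((n - d.natAbs : ℕ) : ℝ) = |((((n:ℤ) - d) : ℤ) : ℝ)| := by
              rw [← Int.cast_abs,
                show |((n:ℤ) - d)| = ((n - d.natAbs : ℕ) : ℤ) from by
                  rw [abs_of_nonneg (by omega)]; omega]
              norm_cast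
            rw [hphi, hg, h1]
end

section
/- Let t : ℤ → ℂ satisfy ∑_{k=-∞}^{∞} |t_k|² < ∞ and t_0 ≠ 0. Let T_n be the n×n Toeplitz matrix whose (j,k) entry is t_{j-k}, and let Ĉ_n be the n×n circulant matrix whose (j,k) entry is ĉ_{(k-j) mod n}, where ĉ_0 = t_0 and ĉ_k = t_{-k} + t_{n-k} for 1 ≤ k ≤ n-1. Then lim_{n→∞} ‖Ĉ_n − T_n‖_F / ‖T_n‖_F = 0. -/
open Filter Topology

namespace HatCircAux

noncomputable def aSeq (t : ℤ → ℂ) (m : ℕ) : ℝ :=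
  ‖t (m : ℤ)‖ ^ 2 + ‖t (-(m : ℤ))‖ ^ 2

lemma aSeq_nonneg (t : ℤ → ℂ) (m : ℕ) : 0 ≤ aSeq t m := by
  unfold aSeq; positivity

lemma summable_aSeq (t : ℤ → ℂ) (hsq : Summable fun k : ℤ => ‖t k‖ ^ 2) :
    Summable (aSeq t) := by
  have h1 : Summable fun m : ℕ => ‖t (m : ℤ)‖ ^ 2 :=
    hsq.comp_injective (fun a b h => by exact_mod_cast h)
  have h2 : Summable fun m : ℕ => ‖t (-(m : ℤ))‖ ^ 2 :=
    hsq.comp_injective (fun a b h => by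
      simp only [neg_inj] at h; exact_mod_cast h)
  exact h1.add h2

/-- tail sums -/
noncomputable def uTail (t : ℤ → ℂ) (M : ℕ) : ℝ := ∑' k : ℕ, aSeq t (k + M)

lemma uTail_nonneg (t : ℤ → ℂ) (M : ℕ) : 0 ≤ uTail t M :=
  tsum_nonneg fun _ => aSeq_nonneg t _

lemma summable_shift (t : ℤ → ℂ) (hsq : Summable fun k : ℤ => ‖t k‖ ^ 2) (M : ℕ) :
    Summable fun k : ℕ => aSeq t (k + M) :=
  (summable_nat_add_iff M).2 (summable_aSeq t hsq)

lemma tendsto_uTail (t : ℤ → ℂ) (hsq : Summable fun k : ℤ => ‖t k‖ ^ 2) :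
    Tendsto (uTail t) atTop (𝓝 0) := by
  exact tendsto_sum_nat_add (aSeq t)

lemma entry_eq (t : ℤ → ℂ) (n : ℕ) (j k : Fin n) :
    (hatCirculant t n - toeplitz t n) j k =
      if (j : ℕ) = k then 0 else
        if (j : ℕ) < k then t ((j : ℤ) - k + n) else t ((j : ℤ) - k - n) := by
  have hj := j.isLt
  have hk := k.isLt
  have hn : 0 < n := lt_of_le_of_lt (Nat.zero_le _) hj
  simp only [Matrix.sub_apply, hatCirculant, toeplitz, Matrix.of_apply]
  rcases lt_trichotomy ((j : ℕ)) ((k : ℕ)) with h | h | h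
  · have hmod : ((k : ℤ) - j) % n = (k : ℤ) - j :=
      Int.emod_eq_of_lt (by omega) (by omega)
    rw [hmod]
    rw [if_neg (by omega), if_pos h]
    rw [hatCoeff, if_neg (by omega)]
    have e1 : -((k : ℤ) - j) = (j : ℤ) - k := by ring
    have e2 : (n : ℤ) - ((k : ℤ) - j) = (j : ℤ) - k + n := by ring
    rw [e1, e2]; ring
  · rw [if_pos h]
    have e : (k : ℤ) - j = 0 := by omega
    rw [e]
    simp [hatCoeff]
    rw [show (j : ℤ) - k = 0 by omega]
    simp
  · have hmod : ((k : ℤ) - j) % n = (k : ℤ) - j + n := by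
      have h1 : ((k : ℤ) - j + n) % n = ((k : ℤ) - j) % n := by
        have := Int.add_mul_emod_self_left ((k : ℤ) - j) (n : ℤ) 1
        simpa using this
      rw [← h1]
      exact Int.emod_eq_of_lt (by omega) (by omega)
    rw [hmod, if_neg (by omega), if_neg (by omega)]
    rw [hatCoeff, if_neg (by omega)]
    have e1 : -((k : ℤ) - j + n) = (j : ℤ) - k - n := by ring
    have e2 : (n : ℤ) - ((k : ℤ) - j + n) = (j : ℤ) - k := by ring
    rw [e1, e2]; ring

lemma entry_sq_le (t : ℤ → ℂ) (n : ℕ) (j k : Fin n) :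
    ‖(hatCirculant t n - toeplitz t n) j k‖ ^ 2 ≤
      if (j : ℕ) = k then 0 else aSeq t (n - Nat.dist (j : ℕ) (k : ℕ)) := by
  have hj := j.isLt
  have hk := k.isLt
  rw [entry_eq]
  rcases eq_or_ne ((j : ℕ)) ((k : ℕ)) with h | h
  · simp [h]
  · rw [if_neg h, if_neg h]
    rcases lt_or_gt_of_ne h with hlt | hgt
    · rw [if_pos hlt]
      have e : (j : ℤ) - k + n = ((n - Nat.dist (j : ℕ) (k : ℕ) : ℕ) : ℤ) := by
        rw [Nat.dist_eq_max_sub_min]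
        push_cast
        omega
      rw [e]
      unfold aSeq
      have : 0 ≤ ‖t (-((n - Nat.dist (j : ℕ) (k : ℕ) : ℕ) : ℤ))‖ ^ 2 := by positivity
      linarith
    · rw [if_neg (by omega)]
      have e : (j : ℤ) - k - n = -(((n - Nat.dist (j : ℕ) (k : ℕ) : ℕ) : ℤ)) := by
        rw [Nat.dist_eq_max_sub_min]
        push_cast
        omega
      rw [e]
      unfold aSeq
      have : 0 ≤ ‖t ((n - Nat.dist (j : ℕ) (k : ℕ) : ℕ) : ℤ)‖ ^ 2 := by positivity
      linarith

/-- row bound -/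
lemma row_sum_le (t : ℤ → ℂ) (hsq : Summable fun k : ℤ => ‖t k‖ ^ 2)
    {n j : ℕ} (hj : j < n) :
    ∑ k ∈ Finset.range n, (if j = k then 0 else aSeq t (n - Nat.dist j k)) ≤
      uTail t (n - j) + uTail t (j + 1) := by
  have hsplit : Finset.range n = Finset.range j ∪ Finset.Ico j n := by
    simp only [Finset.range_eq_Ico]
    exact (Finset.Ico_union_Ico_eq_Ico (Nat.zero_le j) (le_of_lt hj)).symm
  rw [hsplit, Finset.sum_union (by
    simp [Finset.disjoint_left, Finset.mem_Ico]
    omega)]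
  have h1 : ∑ k ∈ Finset.range j, (if j = k then 0 else aSeq t (n - Nat.dist j k)) ≤
      uTail t (n - j) := by
    have heq : ∀ k ∈ Finset.range j,
        (if j = k then 0 else aSeq t (n - Nat.dist j k)) = aSeq t (k + (n - j)) := by
      intro k hk
      rw [Finset.mem_range] at hk
      rw [if_neg (by omega)]
      congr 1
      rw [Nat.dist_eq_max_sub_min]
      omega
    rw [Finset.sum_congr rfl heq]
    exact Summable.sum_le_tsum _ (fun i _ => aSeq_nonneg t _) (summable_shift t hsq (n - j))
  have h2 : ∑ k ∈ Finset.Ico j n, (if j = k then 0 else aSeq t (n - Nat.dist j k)) ≤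
      uTail t (j + 1) := by
    rw [Finset.sum_Ico_eq_sum_range]
    obtain ⟨m, hm⟩ : ∃ m, n - j = m + 1 := ⟨n - j - 1, by omega⟩
    rw [hm, Finset.sum_range_succ']
    have h0 : (if j = j + 0 then (0:ℝ) else aSeq t (n - Nat.dist j (j + 0))) = 0 := by simp
    rw [h0, add_zero]
    calc ∑ i ∈ Finset.range m, (if j = j + (i + 1) then (0:ℝ)
            else aSeq t (n - Nat.dist j (j + (i + 1))))
        = ∑ i ∈ Finset.range m, (fun i' => aSeq t (i' + (j + 1))) (m - 1 - i) := by
          refine Finset.sum_congr rfl fun i hi => ?_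
          rw [Finset.mem_range] at hi
          rw [if_neg (by omega)]
          congr 1
          rw [Nat.dist_eq_max_sub_min]
          omega
      _ = ∑ i ∈ Finset.range m, aSeq t (i + (j + 1)) :=
          Finset.sum_range_reflect (fun i' => aSeq t (i' + (j + 1))) m
      _ ≤ uTail t (j + 1) :=
          Summable.sum_le_tsum _ (fun i _ => aSeq_nonneg t _) (summable_shift t hsq (j + 1))
  linarith

lemma frob_sq_diff_le (t : ℤ → ℂ) (hsq : Summable fun k : ℤ => ‖t k‖ ^ 2)
    (n : ℕ) :
    ∑ j : Fin n, ∑ k : Fin n, ‖(hatCirculant t n - toeplitz t n) j k‖ ^ 2 ≤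
      2 * ∑ i ∈ Finset.range n, uTail t (i + 1) := by
  have step1 : ∑ j : Fin n, ∑ k : Fin n, ‖(hatCirculant t n - toeplitz t n) j k‖ ^ 2
      ≤ ∑ j ∈ Finset.range n, ∑ k ∈ Finset.range n,
          (if j = k then 0 else aSeq t (n - Nat.dist j k)) := by
    have : ∑ j : Fin n, ∑ k : Fin n, ‖(hatCirculant t n - toeplitz t n) j k‖ ^ 2
        ≤ ∑ j : Fin n, ∑ k : Fin n,
            (if (j : ℕ) = (k : ℕ) then 0 else aSeq t (n - Nat.dist (j : ℕ) (k : ℕ))) :=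
      Finset.sum_le_sum fun j _ => Finset.sum_le_sum fun k _ => entry_sq_le t n j k
    refine this.trans (le_of_eq ?_)
    rw [Fin.sum_univ_eq_sum_range (fun j => ∑ k : Fin n,
      (if j = (k : ℕ) then 0 else aSeq t (n - Nat.dist j (k : ℕ)))) n]
    exact Finset.sum_congr rfl fun j _ =>
      Fin.sum_univ_eq_sum_range (fun k => if j = k then 0 else aSeq t (n - Nat.dist j k)) n
  have step2 : ∑ j ∈ Finset.range n, ∑ k ∈ Finset.range n,
      (if j = k then 0 else aSeq t (n - Nat.dist j k))
      ≤ ∑ j ∈ Finset.range n, (uTail t (n - j) + uTail t (j + 1)) :=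
    Finset.sum_le_sum fun j hj => row_sum_le t hsq (Finset.mem_range.1 hj)
  have step3 : ∑ j ∈ Finset.range n, (uTail t (n - j) + uTail t (j + 1)) =
      2 * ∑ i ∈ Finset.range n, uTail t (i + 1) := by
    rw [Finset.sum_add_distrib]
    have : ∑ j ∈ Finset.range n, uTail t (n - j) = ∑ j ∈ Finset.range n, uTail t (j + 1) := by
      rw [← Finset.sum_range_reflect (fun j => uTail t (j + 1)) n]
      exact Finset.sum_congr rfl fun j hj => by
        rw [Finset.mem_range] at hj; congr 1; omega
    rw [this]; ring
  linarith

lemma frob_sq_toeplitz_ge (t : ℤ → ℂ) (n : ℕ) :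
    (n : ℝ) * ‖t 0‖ ^ 2 ≤
      ∑ j : Fin n, ∑ k : Fin n, ‖(toeplitz t n) j k‖ ^ 2 := by
  have h1 : (n : ℝ) * ‖t 0‖ ^ 2 =
      ∑ j : Fin n, ‖(toeplitz t n) j j‖ ^ 2 := by
    simp [toeplitz, Finset.sum_const, nsmul_eq_mul]
  rw [h1]
  exact Finset.sum_le_sum fun j _ =>
    Finset.single_le_sum (f := fun k => ‖(toeplitz t n) j k‖ ^ 2)
      (fun k _ => by positivity) (Finset.mem_univ j)

end HatCircAux

/-- if `t : ℤ → ℂ` is square-summable and `t_0 ≠ 0`, then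
`‖Ĉ_n − T_n‖_F / ‖T_n‖_F → 0` as `n → ∞`. -/
theorem hatCirculant_asymptotically_equivalent_toeplitz
    (t : ℤ → ℂ) (hsq : Summable fun k : ℤ => ‖t k‖ ^ 2) (ht0 : t 0 ≠ 0) :
    Tendsto (fun n : ℕ =>
        frobNorm (hatCirculant t n - toeplitz t n) / frobNorm (toeplitz t n))
      atTop (𝓝 0) := by
  open HatCircAux in
  set c : ℝ := ‖t 0‖ ^ 2 with hc
  have hcpos : 0 < c := by
    have := norm_pos_iff.mpr ht0
    positivity
  -- the majorant
  set g : ℕ → ℝ := fun n =>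
    Real.sqrt ((2 / c) * ((n : ℝ)⁻¹ * ∑ i ∈ Finset.range n, uTail t (i + 1))) with hg
  have hglim : Tendsto g atTop (𝓝 0) := by
    have h1 : Tendsto (fun M : ℕ => uTail t (M + 1)) atTop (𝓝 0) :=
      (tendsto_uTail t hsq).comp (Filter.tendsto_add_atTop_nat 1)
    have h2 := h1.cesaro
    have h3 : Tendsto (fun n : ℕ =>
        (2 / c) * ((n : ℝ)⁻¹ * ∑ i ∈ Finset.range n, uTail t (i + 1))) atTop (𝓝 0) := by
      simpa using h2.const_mul (2 / c)
    simpa [hg] using h3.sqrt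
  refine squeeze_zero' ?_ ?_ hglim
  · filter_upwards with n
    exact div_nonneg (Real.sqrt_nonneg _) (Real.sqrt_nonneg _)
  · filter_upwards [eventually_ge_atTop 1] with n hn
    set A : ℝ := ∑ j : Fin n, ∑ k : Fin n,
      ‖(hatCirculant t n - toeplitz t n) j k‖ ^ 2 with hA
    set B : ℝ := ∑ j : Fin n, ∑ k : Fin n, ‖(toeplitz t n) j k‖ ^ 2 with hB
    set S : ℝ := 2 * ∑ i ∈ Finset.range n, uTail t (i + 1) with hS
    have hA0 : 0 ≤ A := Finset.sum_nonneg fun j _ => Finset.sum_nonneg fun k _ => by positivity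
    have hAS : A ≤ S := frob_sq_diff_le t hsq n
    have hBn : (n : ℝ) * c ≤ B := frob_sq_toeplitz_ge t n
    have hncpos : 0 < (n : ℝ) * c := by
      have : (0 : ℝ) < n := by exact_mod_cast hn
      positivity
    have step : frobNorm (hatCirculant t n - toeplitz t n) / frobNorm (toeplitz t n)
        ≤ Real.sqrt S / Real.sqrt ((n : ℝ) * c) := by
      unfold frobNorm
      rw [← hA, ← hB]
      by_cases hBz : Real.sqrt B = 0
      · rw [hBz, div_zero]
        exact div_nonneg (Real.sqrt_nonneg _) (Real.sqrt_nonneg _)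
      · have hBpos : 0 < Real.sqrt B :=
          lt_of_le_of_ne (Real.sqrt_nonneg B) (Ne.symm hBz)
        exact div_le_div₀ (Real.sqrt_nonneg S) (Real.sqrt_le_sqrt hAS)
          (Real.sqrt_pos.2 hncpos) (Real.sqrt_le_sqrt hBn)
    refine step.trans (le_of_eq ?_)
    rw [← Real.sqrt_div (le_trans hA0 hAS)]
    congr 1
    have hn0 : (n : ℝ) ≠ 0 := by
      have : (0 : ℝ) < n := by exact_mod_cast hn
      exact ne_of_gt this
    rw [hS]
    ring
end
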